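/- Let m ≥ 1 and let A be an m × m complex matrix such that A·Ā is unitary, where Ā is the entrywise complex conjugate of A. Then the trace of Aᴴ·A (which is a nonnegative real number, being the sum Σ_{i,j} |a_{ij}|²) satisfies Tr(Aᴴ A) ≥ m. In particular, if m ≥ 2 then Tr(Aᴴ A) ≥ 2. -/

import Mathlib

open Matrix ComplexOrder

/-- If `A` is an `m × m` complex matrix (`m ≥ 1`) such that `A · Ā` is unitary,
then `Tr(Aᴴ A) ≥ m`; in particular `Tr(Aᴴ A) ≥ 2` when `m ≥ 2`. -/
theorem stmt2 {m : ℕ} (hm : 1 ≤ m) (A : Matrix (Fin m) (Fin m) ℂ)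
    (hAA : A * A.map (starRingEnd ℂ) ∈ Matrix.unitaryGroup (Fin m) ℂ) :
    (m : ℝ) ≤ ((Aᴴ * A).trace).re ∧ (2 ≤ m → (2 : ℝ) ≤ ((Aᴴ * A).trace).re) := by
  have hAbH : (A.map (starRingEnd ℂ))ᴴ = Aᵀ := by
    ext i j
    simp [conjTranspose_apply, Matrix.map_apply]
  -- unitarity gives A * Ab * (Aᵀ * Aᴴ) = 1
  have h1 : A * A.map (starRingEnd ℂ) * (Aᵀ * Aᴴ) = 1 := by
    have := (Matrix.mem_unitaryGroup_iff).mp hAA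
    rw [Matrix.star_eq_conjTranspose, conjTranspose_mul, hAbH, ← Matrix.mul_assoc] at this
    rw [← Matrix.mul_assoc]
    exact this
  -- rotate to get P * Q = 1
  have hPQ : (Aᴴ * A) * (A.map (starRingEnd ℂ) * Aᵀ) = 1 := by
    have h2 : A * (A.map (starRingEnd ℂ) * Aᵀ * Aᴴ) = 1 := by
      rw [← h1]; simp only [Matrix.mul_assoc]
    have h3 : A.map (starRingEnd ℂ) * Aᵀ * Aᴴ * A = 1 := (mul_eq_one_comm).mp h2
    have h4 : A.map (starRingEnd ℂ) * Aᵀ * (Aᴴ * A) = 1 := by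
      rw [← h3]; simp only [Matrix.mul_assoc]
    exact (mul_eq_one_comm).mpr h4
  have hP : (Aᴴ * A).PosSemidef := Matrix.posSemidef_conjTranspose_mul_self A
  obtain ⟨S, hS2, hSH⟩ : ∃ S : Matrix (Fin m) (Fin m) ℂ, S * S = Aᴴ * A ∧ S.IsHermitian := by
    open MatrixOrder in
    exact ⟨CFC.sqrt (Aᴴ * A), CFC.sqrt_mul_sqrt_self _ hP.nonneg,
      (CFC.sqrt_nonneg _).posSemidef.1⟩
  have h5 : S * (S * (A.map (starRingEnd ℂ) * Aᵀ)) = 1 := by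
    rw [← Matrix.mul_assoc, hS2, hPQ]
  have hSdet : IsUnit S.det := by
    refine IsUnit.of_mul_eq_one (S * (A.map (starRingEnd ℂ) * Aᵀ)).det ?_
    rw [← Matrix.det_mul, h5, Matrix.det_one]
  have hSC : S * S⁻¹ = 1 := Matrix.mul_nonsing_inv S hSdet
  have hCH : (S⁻¹).IsHermitian := hSH.inv
  have hCC : S⁻¹ * S⁻¹ = A.map (starRingEnd ℂ) * Aᵀ := by
    have hQinv : (Aᴴ * A)⁻¹ = A.map (starRingEnd ℂ) * Aᵀ := Matrix.inv_eq_right_inv hPQ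
    rw [← Matrix.mul_inv_rev, hS2, hQinv]
  -- r as a sum of squared norms of A entries
  have hrA : ((Aᴴ * A).trace).re = ∑ i : Fin m, ∑ k : Fin m, Complex.normSq (A k i) := by
    rw [Matrix.trace]
    simp only [Matrix.diag_apply, Matrix.mul_apply, conjTranspose_apply]
    rw [Complex.re_sum]
    refine Finset.sum_congr rfl fun i _ => ?_
    rw [Complex.re_sum]
    refine Finset.sum_congr rfl fun k _ => ?_
    simp [mul_comm, Complex.mul_conj]
  have hr0 : 0 ≤ ((Aᴴ * A).trace).re := by
    rw [hrA]
    exact Finset.sum_nonneg fun i _ => Finset.sum_nonneg fun k _ => Complex.normSq_nonneg _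
  -- sum of |S|^2 entries equals r
  have hSsum : ∑ p : Fin m × Fin m, ‖S p.1 p.2‖ ^ 2 = ((Aᴴ * A).trace).re := by
    rw [← hS2, Matrix.trace, Fintype.sum_prod_type]
    simp only [Matrix.diag_apply, Matrix.mul_apply]
    rw [Complex.re_sum]
    refine Finset.sum_congr rfl fun i _ => ?_
    rw [Complex.re_sum]
    refine Finset.sum_congr rfl fun k _ => ?_
    rw [← hSH.apply k i]
    rw [show (S i k : ℂ) * star (S i k) = (Complex.normSq (S i k) : ℂ) from
      Complex.mul_conj _]
    simp [Complex.sq_norm]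
  -- sum of |C|^2 entries equals r
  have hCsum : ∑ p : Fin m × Fin m, ‖S⁻¹ p.1 p.2‖ ^ 2 = ((Aᴴ * A).trace).re := by
    have hTrQ : ((A.map (starRingEnd ℂ) * Aᵀ).trace).re = ((Aᴴ * A).trace).re := by
      rw [Matrix.trace, hrA]
      simp only [Matrix.diag_apply, Matrix.mul_apply, Matrix.map_apply,
        Matrix.transpose_apply]
      rw [Complex.re_sum, Finset.sum_comm]
      refine Finset.sum_congr rfl fun i _ => ?_
      rw [Complex.re_sum]
      refine Finset.sum_congr rfl fun k _ => ?_
      simp [mul_comm, Complex.mul_conj]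
    rw [← hTrQ, ← hCC, Matrix.trace, Fintype.sum_prod_type]
    simp only [Matrix.diag_apply, Matrix.mul_apply]
    rw [Complex.re_sum]
    refine Finset.sum_congr rfl fun i _ => ?_
    rw [Complex.re_sum]
    refine Finset.sum_congr rfl fun k _ => ?_
    rw [← hCH.apply k i]
    rw [show (S⁻¹ i k : ℂ) * star (S⁻¹ i k) = (Complex.normSq (S⁻¹ i k) : ℂ) from
      Complex.mul_conj _]
    simp [Complex.sq_norm]
  -- m ≤ sum of |S p| * |C p|
  have hm2 : (m : ℝ) ≤ ∑ p : Fin m × Fin m,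
      ‖S p.1 p.2‖ * ‖S⁻¹ p.1 p.2‖ := by
    have htr : ((S * S⁻¹).trace).re = (m : ℝ) := by
      rw [hSC]; simp
    rw [← htr, Matrix.trace, Fintype.sum_prod_type]
    simp only [Matrix.diag_apply, Matrix.mul_apply]
    rw [Complex.re_sum]
    refine Finset.sum_le_sum fun i _ => ?_
    rw [Complex.re_sum]
    refine Finset.sum_le_sum fun k _ => ?_
    calc (S i k * S⁻¹ k i).re ≤ ‖S i k * S⁻¹ k i‖ := Complex.re_le_norm _
      _ = ‖S i k‖ * ‖S⁻¹ k i‖ := norm_mul _ _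
      _ = ‖S i k‖ * ‖S⁻¹ i k‖ := by
          rw [← hCH.apply i k]; simp
  -- Cauchy–Schwarz
  have hCS : (∑ p : Fin m × Fin m, ‖S p.1 p.2‖ * ‖S⁻¹ p.1 p.2‖) ^ 2
      ≤ ((Aᴴ * A).trace).re * ((Aᴴ * A).trace).re := by
    calc _ ≤ (∑ p : Fin m × Fin m, ‖S p.1 p.2‖ ^ 2) *
        (∑ p : Fin m × Fin m, ‖S⁻¹ p.1 p.2‖ ^ 2) :=
        Finset.sum_mul_sq_le_sq_mul_sq _ _ _
      _ = _ := by rw [hSsum, hCsum]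
  have key : (m : ℝ) ≤ ((Aᴴ * A).trace).re := by
    nlinarith [hm2, hCS, hr0, Nat.cast_nonneg (α := ℝ) m]
  refine ⟨key, fun h2 => ?_⟩
  have : (2:ℝ) ≤ (m:ℝ) := by exact_mod_cast h2
  linarith
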